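/- Let x = Re(z) ≥ 0, y = Im(z), h > 0, Δ ≥ 1, with |z| ≥ max{2h, 1}. Then ∑_{n=0}^{∞} 1/((Δ(z+h)+n)²·(Δ(z+h)+n+1)²) ≤ 1/(Δ(x+h+|y|))³ up to an absolute multiplicative constant, and in particular this sum is O(1/(Δ|z|)³). -/

import Mathlib

open Filter Finset Topology

theorem stmt14 :
    ∃ C : ℝ, 0 < C ∧ ∀ (z : ℂ) (h Δ : ℝ), 0 ≤ z.re → 0 < h → 1 ≤ Δ →
      max (2 * h) 1 ≤ ‖z‖ →
      ‖∑' n : ℕ, 1 / ((Δ * (z + h) + n)^2 * (Δ * (z + h) + n + 1)^2)‖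
          ≤ C / (Δ * (z.re + h + |z.im|))^3 ∧
      ‖∑' n : ℕ, 1 / ((Δ * (z + h) + n)^2 * (Δ * (z + h) + n + 1)^2)‖
          ≤ C / (Δ * ‖z‖)^3 := by
  refine ⟨4, by norm_num, ?_⟩
  intro z h Δ hx hh hΔ hmax
  have hΔ0 : (0:ℝ) < Δ := lt_of_lt_of_le one_pos hΔ
  have hy0 : (0:ℝ) ≤ |z.im| := abs_nonneg _
  set s : ℝ := Δ * (z.re + h + |z.im|) with hs_def
  have hs0 : 0 < s := mul_pos hΔ0 (by linarith)
  set w : ℂ := ↑Δ * (z + ↑h) with hw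
  -- modulus lower bound
  have key : ∀ t : ℝ, 0 ≤ t → (s + t)^2 ≤ 2 * ‖w + t‖^2 := by
    intro t ht
    have h1 : (w + (t:ℂ)).re = Δ * (z.re + h) + t := by
      simp [hw, Complex.add_re, Complex.mul_re]
    have h2 : (w + (t:ℂ)).im = Δ * z.im := by
      simp [hw, Complex.add_im, Complex.mul_im]
    have habs : ‖w + t‖^2 = (Δ * (z.re + h) + t)^2 + (Δ * z.im)^2 := by
      rw [Complex.sq_norm, Complex.normSq_apply, h1, h2]; ring
    rw [habs]
    have hyy : (Δ * z.im)^2 = (Δ * |z.im|)^2 := by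
      rw [mul_pow, mul_pow, sq_abs]
    rw [hyy]
    have hst : s + t = (Δ * (z.re + h) + t) + Δ * |z.im| := by rw [hs_def]; ring
    rw [hst]
    nlinarith [sq_nonneg ((Δ * (z.re + h) + t) - Δ * |z.im|)]
  -- term bound
  set T : ℕ → ℂ := fun n => 1 / ((w + n)^2 * (w + n + 1)^2) with hT
  set g : ℝ → ℝ := fun t => 1 / (s + t) with hg
  have hgpos : ∀ t : ℝ, 0 ≤ t → 0 < s + t := fun t ht => by linarith
  have hbound : ∀ n : ℕ, ‖T n‖ ≤ (4 / s^2) * (g n - g (n+1)) := by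
    intro n
    have hn0 : (0:ℝ) ≤ (n:ℝ) := Nat.cast_nonneg n
    have hn1 : (0:ℝ) ≤ (n:ℝ) + 1 := by linarith
    have hsn : 0 < s + n := hgpos _ hn0
    have hsn1 : 0 < s + ((n:ℝ)+1) := hgpos _ hn1
    have hA : (s + (n:ℝ))^2 ≤ 2 * ‖w + (n:ℂ)‖^2 := by
      have := key n hn0
      rwa [Complex.ofReal_natCast] at this
    have hB : (s + ((n:ℝ)+1))^2 ≤ 2 * ‖w + (n:ℂ) + 1‖^2 := by
      have h' := key ((n:ℝ)+1) hn1
      rw [show ((((n:ℝ)+1):ℝ):ℂ) = (n:ℂ)+1 by push_cast; ring] at h'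
      rwa [show w + ((n:ℂ)+1) = w + (n:ℂ) + 1 from (add_assoc _ _ _).symm] at h'
    set A : ℝ := ‖w + (n:ℂ)‖^2 with hA_def
    set B : ℝ := ‖w + (n:ℂ) + 1‖^2 with hB_def
    have hApos : 0 < A := by
      have := pow_pos hsn 2
      linarith
    have hBpos : 0 < B := by
      have := pow_pos hsn1 2
      linarith
    have hTn : ‖T n‖ = 1 / (A * B) := by
      simp only [hT, hA_def, hB_def]
      rw [norm_div, norm_one, norm_mul, norm_pow, norm_pow]
    have hgdiff : g n - g ((n:ℝ)+1) = 1 / ((s+(n:ℝ)) * (s+((n:ℝ)+1))) := by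
      simp only [hg]
      field_simp
      ring
    rw [hTn, hgdiff]
    have hprod : s^2 ≤ (s+(n:ℝ)) * (s+((n:ℝ)+1)) := by nlinarith
    have hP0 : 0 < (s+(n:ℝ)) * (s+((n:ℝ)+1)) := mul_pos hsn hsn1
    have h4 : s^2 * ((s+(n:ℝ)) * (s+((n:ℝ)+1))) ≤ 4 * (A * B) := by
      calc s^2 * ((s+(n:ℝ)) * (s+((n:ℝ)+1)))
          ≤ ((s+(n:ℝ)) * (s+((n:ℝ)+1))) * ((s+(n:ℝ)) * (s+((n:ℝ)+1))) :=
            mul_le_mul_of_nonneg_right hprod hP0.le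
        _ = (s+(n:ℝ))^2 * (s+((n:ℝ)+1))^2 := by ring
        _ ≤ (2*A) * (2*B) := mul_le_mul hA hB (sq_nonneg _) (by linarith)
        _ = 4 * (A * B) := by ring
    calc 1 / (A * B)
        ≤ 4 / (s^2 * ((s+(n:ℝ)) * (s+((n:ℝ)+1)))) := by
          rw [div_le_div_iff₀ (mul_pos hApos hBpos) (mul_pos (pow_pos hs0 2) hP0)]
          linarith [h4]
      _ = (4/s^2) * (1 / ((s+(n:ℝ)) * (s+((n:ℝ)+1)))) := by
          rw [div_mul_div_comm, mul_one]
  -- telescoping sum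
  have htel : HasSum (fun n : ℕ => g n - g ((n:ℝ)+1)) (1/s) := by
    have hnonneg : ∀ n : ℕ, 0 ≤ g n - g ((n:ℝ)+1) := by
      intro n
      have hn0 : (0:ℝ) ≤ (n:ℝ) := Nat.cast_nonneg n
      have h1 := hgpos n hn0
      have h2 := hgpos ((n:ℝ)+1) (by linarith)
      simp only [hg, sub_nonneg]
      apply one_div_le_one_div_of_le h1
      linarith
    rw [hasSum_iff_tendsto_nat_of_nonneg hnonneg]
    have heq : ∀ n : ℕ, ∑ i ∈ range n, (g i - g ((i:ℝ)+1)) = g 0 - g n := by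
      intro n
      have := Finset.sum_range_sub' (fun k : ℕ => g k) n
      push_cast at this
      exact this
    simp only [heq]
    have h1 : Tendsto (fun n : ℕ => g (n:ℝ)) atTop (𝓝 0) := by
      simp only [hg, one_div]
      apply Tendsto.inv_tendsto_atTop
      apply tendsto_atTop_add_const_left
      exact tendsto_natCast_atTop_atTop
    have hg0 : g 0 = 1/s := by simp [hg]
    rw [← hg0]
    simpa using tendsto_const_nhds.sub h1
  have hgsum : HasSum (fun n : ℕ => (4 / s^2) * (g n - g ((n:ℝ)+1))) ((4/s^2) * (1/s)) :=
    htel.mul_left _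
  have hTsummable : Summable (fun n => ‖T n‖) :=
    Summable.of_nonneg_of_le (fun n => norm_nonneg _) hbound hgsum.summable
  have hmain : ‖∑' n : ℕ, T n‖ ≤ 4 / s^3 := by
    calc ‖∑' n : ℕ, T n‖ = ‖∑' n : ℕ, T n‖ := rfl
      _ ≤ ∑' n : ℕ, ‖T n‖ := norm_tsum_le_tsum_norm hTsummable
      _ ≤ ∑' n : ℕ, (4 / s^2) * (g n - g ((n:ℝ)+1)) :=
          Summable.tsum_le_tsum hbound hTsummable hgsum.summable
      _ = (4/s^2) * (1/s) := hgsum.tsum_eq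
      _ = 4 / s^3 := by field_simp
  have hTeq : (∑' n : ℕ, 1 / ((↑Δ * (z + ↑h) + ↑n)^2 * (↑Δ * (z + ↑h) + ↑n + 1)^2)) = ∑' n : ℕ, T n := by
    apply tsum_congr
    intro n
    simp only [hT, hw]
  refine ⟨by rw [hTeq]; exact hmain, ?_⟩
  rw [hTeq]
  refine hmain.trans ?_
  have hz0 : (0:ℝ) < ‖z‖ := lt_of_lt_of_le one_pos (le_trans (le_max_right _ _) hmax)
  have hzle : Δ * ‖z‖ ≤ s := by
    rw [hs_def]
    have habs := Complex.norm_le_abs_re_add_abs_im z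
    have hxre : |z.re| = z.re := abs_of_nonneg hx
    rw [hxre] at habs
    apply mul_le_mul_of_nonneg_left _ hΔ0.le
    linarith
  have hpow : (Δ * ‖z‖)^3 ≤ s^3 :=
    pow_le_pow_left₀ (by positivity) hzle 3
  rw [div_le_div_iff₀ (by positivity) (by positivity)]
  nlinarith [hpow]
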